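/- For all natural numbers n and every positive integer β, the special case α = 1, γ = 1 holds: ∑_{i=0}^n (-1)^i * C((β-1)*(n-i) + 1, i) * (1/(β*(n-i)+1)) * C(β*(n-i)+1, n-i) = δ_{0,n}. -/

import Mathlib

open Finset

namespace Stmt3Aux

/-- Generalized binomial coefficient over ℚ. -/
noncomputable def gb (y : ℚ) (k : ℕ) : ℚ :=
  (∏ j ∈ range k, (y - j)) / (k.factorial : ℚ)

lemma factorial_ne (k : ℕ) : ((k.factorial : ℚ)) ≠ 0 := by
  exact_mod_cast (Nat.factorial_pos k).ne'

lemma gb_zero (y : ℚ) : gb y 0 = 1 := by simp [gb]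

lemma gb_congr {y₁ y₂ : ℚ} (h : y₁ = y₂) (k : ℕ) : gb y₁ k = gb y₂ k := by rw [h]

lemma prod_shift (y : ℚ) (k : ℕ) :
    ∏ j ∈ range (k+1), (y - j) = (∏ j ∈ range k, (y - 1 - j)) * y := by
  rw [Finset.prod_range_succ']
  congr 1
  · apply Finset.prod_congr rfl
    intro j _
    push_cast
    ring
  · simp

lemma gb_pascal (y : ℚ) (k : ℕ) :
    gb y (k+1) = gb (y-1) (k+1) + gb (y-1) k := by
  have h1 := prod_shift y k
  have h2 : ∏ j ∈ range (k+1), (y - 1 - j)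
      = (∏ j ∈ range k, (y - 1 - j)) * (y - 1 - k) := Finset.prod_range_succ _ _
  rw [gb, gb, gb, h1, h2]
  have hk : (k.factorial : ℚ) ≠ 0 := factorial_ne k
  have hfact : (((k+1).factorial : ℕ) : ℚ) = (k+1) * (k.factorial : ℚ) := by
    push_cast [Nat.factorial_succ]; ring
  rw [hfact]
  have hk1 : ((k : ℚ) + 1) ≠ 0 := by positivity
  field_simp
  ring

lemma gb_absorb (a : ℚ) (k : ℕ) :
    gb a (k+1) = a / (k+1) * gb (a-1) k := by
  rw [gb, gb, prod_shift a k]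
  have hfact : (((k+1).factorial : ℕ) : ℚ) = (k+1) * (k.factorial : ℚ) := by
    push_cast [Nat.factorial_succ]; ring
  rw [hfact]
  have hk : (k.factorial : ℚ) ≠ 0 := factorial_ne k
  have hk1 : ((k : ℚ) + 1) ≠ 0 := by positivity
  field_simp

lemma gb_nat (N k : ℕ) : gb (N : ℚ) k = (N.choose k : ℚ) := by
  rcases lt_or_ge N k with h | h
  · have hz : (∏ j ∈ range k, ((N:ℚ) - j)) = 0 :=
      Finset.prod_eq_zero (Finset.mem_range.mpr h) (by simp)
    rw [gb, hz, Nat.choose_eq_zero_of_lt h]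
    simp
  · have hp : (∏ j ∈ range k, ((N:ℚ) - j)) = ((N.descFactorial k : ℕ) : ℚ) := by
      rw [Nat.descFactorial_eq_prod_range, Nat.cast_prod]
      apply Finset.prod_congr rfl
      intro j hj
      have : j ≤ N := le_trans (le_of_lt (Finset.mem_range.mp hj)) h
      rw [Nat.cast_sub this]
    rw [gb, hp, Nat.descFactorial_eq_factorial_mul_choose]
    push_cast
    rw [mul_comm ((k.factorial : ℚ)) _, mul_div_assoc, div_self (factorial_ne k), mul_one]

lemma gb_reflect (y : ℚ) (k : ℕ) :
    gb y k = (-1)^k * gb ((k : ℚ) - 1 - y) k := by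
  have key : ∏ j ∈ range k, (y - j)
      = (-1)^k * ∏ j ∈ range k, (((k : ℚ) - 1 - y) - j) := by
    calc ∏ j ∈ range k, (y - (j:ℚ))
        = ∏ j ∈ range k, (y - ((k - 1 - j : ℕ) : ℚ)) :=
          (Finset.prod_range_reflect (fun j => y - (j:ℚ)) k).symm
      _ = ∏ j ∈ range k, (-1) * (((k : ℚ) - 1 - y) - j) := by
          apply Finset.prod_congr rfl
          intro j hj
          have hj' : j < k := Finset.mem_range.mp hj
          have h1 : k - 1 - j = k - (j + 1) := by omega
          have h2 : j + 1 ≤ k := hj'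
          rw [h1, Nat.cast_sub h2]
          push_cast
          ring
      _ = (-1)^k * ∏ j ∈ range k, (((k : ℚ) - 1 - y) - j) := by
          rw [Finset.prod_mul_distrib, Finset.prod_const, Finset.card_range]
  rw [gb, gb, key]
  ring

/-- Gould polynomial values A_k(x) for parameter z. -/
noncomputable def A (z x : ℚ) : ℕ → ℚ
  | 0 => 1
  | (k+1) => gb (x + k*z + z) (k+1) - z * gb (x + k*z + z - 1) k

lemma A_zero' (z x : ℚ) : A z x 0 = 1 := rfl

lemma A_succ (z x : ℚ) (k : ℕ) :
    A z x (k+1) = gb (x + k*z + z) (k+1) - z * gb (x + k*z + z - 1) k := rfl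

lemma A_vanish (z : ℚ) (k : ℕ) : A z 0 (k+1) = 0 := by
  rw [A_succ, gb_absorb]
  have hk1 : ((k : ℚ) + 1) ≠ 0 := by positivity
  have e : (0 : ℚ) + k*z + z - 1 = 0 + k*z + z - 1 := rfl
  field_simp
  ring

lemma gb_key (a z : ℚ) (k : ℕ) :
    gb a (k+2) - z * gb (a-1) (k+1) =
      (gb (a-1) (k+2) - z * gb (a-2) (k+1)) + (gb (a-1) (k+1) - z * gb (a-2) k) := by
  have p1 := gb_pascal a (k+1)
  have p2 := gb_pascal (a-1) k
  rw [show a - 1 - 1 = a - 2 from by ring] at p2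
  linear_combination p1 - z * p2

lemma A_rec (z x : ℚ) (k : ℕ) :
    A z x (k+1) = A z (x-1) (k+1) + A z (x+z-1) k := by
  cases k with
  | zero =>
    rw [A_succ, A_succ, A_zero']
    simp only [Nat.cast_zero, zero_mul, zero_add]
    simp [gb]
  | succ k =>
    rw [A_succ z x (k+1), A_succ z (x-1) (k+1), A_succ z (x+z-1) k]
    have c1 : gb (x + ((k+1 : ℕ) : ℚ) * z + z) (k+2)
        = gb ((x + ((k+1 : ℕ) : ℚ)*z + z)) (k+2) := rfl
    have hkey := gb_key (x + ((k+1 : ℕ) : ℚ) * z + z) z k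
    have e1 : gb (x - 1 + ((k+1 : ℕ) : ℚ) * z + z) (k+2)
        = gb (x + ((k+1 : ℕ) : ℚ) * z + z - 1) (k+2) := gb_congr (by ring) _
    have e2 : gb (x - 1 + ((k+1 : ℕ) : ℚ) * z + z - 1) (k+1)
        = gb (x + ((k+1 : ℕ) : ℚ) * z + z - 2) (k+1) := gb_congr (by ring) _
    have e3 : gb (x + z - 1 + (k : ℚ) * z + z) (k+1)
        = gb (x + ((k+1 : ℕ) : ℚ) * z + z - 1) (k+1) := gb_congr (by push_cast; ring) _
    have e4 : gb (x + z - 1 + (k : ℚ) * z + z - 1) k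
        = gb (x + ((k+1 : ℕ) : ℚ) * z + z - 2) k := gb_congr (by push_cast; ring) _
    have e5 : gb (x + ((k+1 : ℕ) : ℚ) * z + z - 1) (k+1)
        = gb (x + ((k+1 : ℕ) : ℚ) * z + z - 1) (k+1) := rfl
    linear_combination hkey + z * e2 - e1 - e3 + z * e4

lemma rothe (z : ℕ) : ∀ n x : ℕ, ∀ y : ℚ,
    ∑ k ∈ range (n+1), A z x k * gb (y + ((n - k : ℕ) : ℚ) * z) (n - k)
      = gb ((x : ℚ) + y + n * z) n := by
  intro n
  induction n with
  | zero =>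
    intro x y
    simp [A, gb]
  | succ n ih =>
    intro x
    induction x with
    | zero =>
      intro y
      rw [Finset.sum_eq_single 0]
      · rw [A_zero', one_mul]
        apply gb_congr
        push_cast
        ring
      · intro k hk hk0
        obtain ⟨m, rfl⟩ := Nat.exists_eq_succ_of_ne_zero hk0
        rw [Nat.succ_eq_add_one, Nat.cast_zero, A_vanish, zero_mul]
      · intro h
        exact absurd (Finset.mem_range.mpr (Nat.succ_pos _)) h
    | succ x ihx =>
      intro y
      have hterm : ∀ k ∈ range (n+1),
          A z ((x+1 : ℕ) : ℚ) (k+1) * gb (y + ((n + 1 - (k+1) : ℕ) : ℚ) * z) (n + 1 - (k+1))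
          = A z (x : ℕ) (k+1) * gb (y + ((n - k : ℕ) : ℚ) * z) (n - k)
            + A z ((x : ℚ) + z) k * gb (y + ((n - k : ℕ) : ℚ) * z) (n - k) := by
        intro k hk
        have h1 : n + 1 - (k+1) = n - k := by omega
        rw [h1]
        have h2 : A z ((x+1 : ℕ) : ℚ) (k+1) = A z (x : ℕ) (k+1) + A z ((x:ℚ) + z) k := by
          have hr := A_rec z ((x:ℚ)+1) k
          have e2 : (x:ℚ) + 1 - 1 = (x:ℚ) := by ring
          have e3 : (x:ℚ) + 1 + z - 1 = (x:ℚ) + z := by ring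
          rw [e2, e3] at hr
          have e1 : ((x+1 : ℕ) : ℚ) = (x:ℚ) + 1 := by push_cast; ring
          rw [e1, hr]
        rw [h2]
        ring
      rw [Finset.sum_range_succ', Finset.sum_congr rfl hterm, Finset.sum_add_distrib]
      have ihx0 := ihx y
      rw [Finset.sum_range_succ'] at ihx0
      have hn1 : ∀ k, n + 1 - (k + 1) = n - k := fun k => by omega
      simp only [hn1] at ihx0
      have hsum2 : (∑ k ∈ range (n+1), A z ((x:ℚ) + z) k * gb (y + ((n - k : ℕ) : ℚ) * z) (n - k))
          = gb ((x:ℚ) + z + y + n * z) n := by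
        have h := ih (x + z) y
        have e : ((x + z : ℕ) : ℚ) = (x:ℚ) + z := by push_cast; ring
        rw [e] at h
        rw [h]
      rw [add_right_comm]
      simp only [A_zero', one_mul] at ihx0 ⊢
      rw [ihx0, hsum2]
      have p := gb_pascal (((x+1 : ℕ) : ℚ) + y + ((n+1 : ℕ) : ℚ) * z) n
      have c1 : gb (((x+1 : ℕ) : ℚ) + y + ((n+1 : ℕ) : ℚ) * z - 1) (n+1)
          = gb ((x : ℚ) + y + ((n+1 : ℕ) : ℚ) * z) (n+1) := gb_congr (by push_cast; ring) _
      have c2 : gb (((x+1 : ℕ) : ℚ) + y + ((n+1 : ℕ) : ℚ) * z - 1) n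
          = gb ((x : ℚ) + z + y + (n : ℚ) * z) n := gb_congr (by push_cast; ring) _
      rw [p, c1, c2]

lemma A_one (β : ℕ) (hβ : 0 < β) (k : ℕ) :
    A (β : ℚ) 1 k = (1 / ((β:ℚ) * k + 1)) * ((β * k + 1).choose k : ℕ) := by
  cases k with
  | zero =>
    rw [A_zero']
    norm_num
  | succ k =>
    rw [A_succ]
    have c1 : (1:ℚ) + (k:ℚ)*(β:ℚ) + (β:ℚ) = ((β*(k+1)+1 : ℕ) : ℚ) := by push_cast; ring
    have c2 : (1:ℚ) + (k:ℚ)*(β:ℚ) + (β:ℚ) - 1 = ((β*(k+1) : ℕ) : ℚ) := by push_cast; ring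
    rw [c1] at *
    rw [c2, gb_nat, gb_nat]
    have h := Nat.add_one_mul_choose_eq (β*(k+1)) k
    have hq : ((β*(k+1)+1 : ℕ) : ℚ) * ((β*(k+1)).choose k : ℕ)
        = (((β*(k+1)+1).choose (k+1) : ℕ) : ℚ) * ((k : ℚ) + 1) := by
      exact_mod_cast h
    have hd : ((β:ℚ) * ((k:ℚ)+1) + 1) ≠ 0 := by positivity
    push_cast at hq ⊢
    rw [div_mul_eq_mul_div, one_mul, eq_div_iff (by push_cast at hd ⊢; positivity)]
    linear_combination (-(β : ℚ)) * hq

lemma gb_special (β n k : ℕ) (hβ : 0 < β) (hk : k ≤ n) :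
    gb ((n:ℚ) - (β:ℚ)*(n:ℚ) - 2 + ((n-k : ℕ) : ℚ) * (β:ℚ)) (n-k)
      = (-1)^(n-k) * ((((β-1)*k + 1).choose (n-k) : ℕ) : ℚ) := by
  have e : (n:ℚ) - (β:ℚ)*(n:ℚ) - 2 + ((n-k : ℕ) : ℚ) * (β:ℚ)
      = (n:ℚ) - 2 - (k:ℚ)*(β:ℚ) := by
    rw [Nat.cast_sub hk]; ring
  rw [e, gb_reflect]
  have e2 : ((n-k : ℕ) : ℚ) - 1 - ((n:ℚ) - 2 - (k:ℚ)*(β:ℚ))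
      = (((β-1)*k + 1 : ℕ) : ℚ) := by
    rw [Nat.cast_sub hk]
    push_cast [Nat.cast_sub hβ]
    ring
  rw [e2, gb_nat]

end Stmt3Aux

theorem stmt_3 (n β : ℕ) (hβ : 0 < β) :
    ∑ i ∈ Finset.range (n + 1),
      (-1 : ℚ) ^ i * (((β - 1) * (n - i) + 1).choose i) *
        ((1 : ℚ) / (β * (n - i) + 1)) * ((β * (n - i) + 1).choose (n - i))
      = if n = 0 then 1 else 0 := by
  open Stmt3Aux in
  have key := Stmt3Aux.rothe β n 1 ((n:ℚ) - (β:ℚ)*(n:ℚ) - 2)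
  rw [← Finset.sum_range_reflect]
  simp only [Nat.add_sub_cancel]
  have hterm : ∀ k ∈ Finset.range (n+1),
      (-1 : ℚ) ^ (n-k) * (((β - 1) * (n - (n-k)) + 1).choose (n-k)) *
        ((1 : ℚ) / ((β:ℚ) * ((n:ℚ) - ((n-k : ℕ) : ℚ)) + 1)) * ((β * (n - (n-k)) + 1).choose (n - (n-k)))
      = Stmt3Aux.A (β:ℚ) ((1 : ℕ) : ℚ) k *
          Stmt3Aux.gb (((n:ℚ) - (β:ℚ)*(n:ℚ) - 2) + ((n-k : ℕ) : ℚ) * (β:ℚ)) (n-k) := by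
    intro k hk
    have hk' : k ≤ n := Nat.lt_succ_iff.mp (Finset.mem_range.mp hk)
    rw [Nat.sub_sub_self hk']
    rw [Stmt3Aux.gb_special β n k hβ hk']
    rw [show ((1 : ℕ) : ℚ) = (1 : ℚ) from Nat.cast_one]
    rw [Stmt3Aux.A_one β hβ k, Nat.cast_sub hk']
    push_cast
    ring
  rw [Finset.sum_congr rfl hterm, key]
  have h1 : ((1:ℕ):ℚ) + ((n:ℚ) - (β:ℚ)*(n:ℚ) - 2) + (n:ℚ)*(β:ℚ) = (n:ℚ) - 1 := by
    push_cast; ring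
  rw [h1]
  rcases n with _ | m
  · simp [Stmt3Aux.gb_zero]
  · rw [show ((m+1 : ℕ) : ℚ) - 1 = ((m : ℕ) : ℚ) from by push_cast; ring]
    rw [Stmt3Aux.gb_nat]
    simp [Nat.choose_eq_zero_of_lt]
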